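/- The error-sum function E* : Σ → ℝ, E*(σ) = Σ_{n=1}^∞ (φ(σ) - φ_n(σ)), is continuous with respect to the metric ρ^ℕ(σ,τ) = Σ_{n=1}^∞ ρ(σ_n,τ_n)/n! on Σ. -/

import Mathlib

set_option maxHeartbeats 1000000

open scoped BigOperators

/-- Reciprocal of an extended natural number as a real, with `1/∞ = 0`. -/
noncomputable def pinv (a : ℕ∞) : ℝ := ((a.toNat : ℕ) : ℝ)⁻¹

/-- First Pierce digit: `⌊1/x⌋` for `x ≠ 0`, and `∞` for `x = 0`. -/
noncomputable def pd1 (x : ℝ) : ℕ∞ := if x = 0 then ⊤ else (⌊x⁻¹⌋₊ : ℕ∞)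

/-- Pierce map `T(x) = 1 - ⌊1/x⌋ x` for `x ≠ 0`, `T(0) = 0`. -/
noncomputable def pT (x : ℝ) : ℝ := if x = 0 then 0 else 1 - (⌊x⁻¹⌋₊ : ℝ) * x

/-- `n`-th Pierce digit `d_n(x) = d_1(T^{n-1} x)` (for `n ≥ 1`). -/
noncomputable def pdig (n : ℕ) (x : ℝ) : ℕ∞ := pd1 (pT^[n-1] x)

/-- `1/(d_1(x) ⋯ d_n(x))`, with the convention that a factor `∞` makes it `0`. -/
noncomputable def pprodR (n : ℕ) (x : ℝ) : ℝ := ∏ k ∈ Finset.Icc 1 n, pinv (pdig k x)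

/-- `n`-th partial sum `s_n(x)` of the Pierce expansion of `x`. -/
noncomputable def psum (n : ℕ) (x : ℝ) : ℝ :=
  ∑ k ∈ Finset.Icc 1 n, (-1 : ℝ) ^ (k + 1) * pprodR k x

/-- The error-sum function of Pierce expansions `E(x) = Σ_{n≥1} (x - s_n(x))`. -/
noncomputable def pE (x : ℝ) : ℝ := ∑' n : ℕ, (x - psum (n + 1) x)

/-- A Pierce sequence (0-indexed: `σ k` is the paper's `σ_{k+1}`): terms are positive, strictly
increasing while finite, and once a term is `∞` all later terms are `∞`. -/
def IsPierce (σ : ℕ → ℕ∞) : Prop :=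
  1 ≤ σ 0 ∧ ∀ n, σ n < σ (n + 1) ∨ (σ n = ⊤ ∧ σ (n + 1) = ⊤)

/-- `n`-th partial sum `φ_n(σ)`. -/
noncomputable def pphiN (n : ℕ) (σ : ℕ → ℕ∞) : ℝ :=
  ∑ k ∈ Finset.range n, (-1 : ℝ) ^ k * ∏ i ∈ Finset.range (k + 1), pinv (σ i)

/-- `φ(σ) = Σ_{k≥1} (-1)^{k+1}/(σ_1 ⋯ σ_k)`. -/
noncomputable def pphi (σ : ℕ → ℕ∞) : ℝ :=
  ∑' k : ℕ, (-1 : ℝ) ^ k * ∏ i ∈ Finset.range (k + 1), pinv (σ i)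

/-- The error-sum function of Pierce sequences `E*(σ) = Σ_{n≥1} (φ(σ) - φ_n(σ))`. -/
noncomputable def pEstar (σ : ℕ → ℕ∞) : ℝ := ∑' n : ℕ, (pphi σ - pphiN (n + 1) σ)

/-- The series formula `Σ_{n≥1} (-1)^n n/(σ_1 ⋯ σ_{n+1})` for the error-sum of a sequence. -/
noncomputable def pEstarSeries (σ : ℕ → ℕ∞) : ℝ :=
  ∑' n : ℕ, (-1 : ℝ) ^ (n + 1) * (n + 1) * ∏ i ∈ Finset.range (n + 2), pinv (σ i)

/-- The metric `ρ(x,y) = 1/x + 1/y` for `x ≠ y` (with `1/∞ = 0`), `ρ(x,x) = 0`. -/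
noncomputable def prho (x y : ℕ∞) : ℝ := if x = y then 0 else pinv x + pinv y

/-- The metric `ρ^ℕ(σ,τ) = Σ_{n≥1} ρ(σ_n, τ_n)/n!` on sequences. -/
noncomputable def prhoN (σ τ : ℕ → ℕ∞) : ℝ :=
  ∑' n : ℕ, prho (σ n) (τ n) / ((n + 1).factorial : ℝ)

/-! ### Auxiliary lemmas -/

open Finset Filter

lemma pinv_nonneg' (a : ℕ∞) : 0 ≤ pinv a := by unfold pinv; positivity

lemma pinv_le_one' (a : ℕ∞) : pinv a ≤ 1 := by
  unfold pinv
  rcases Nat.eq_zero_or_pos a.toNat with h | h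
  · simp [h]
  · exact inv_le_one_of_one_le₀ (by exact_mod_cast h)

lemma pinv_top : pinv ⊤ = 0 := by simp [pinv]

lemma pinv_le_inv' {k : ℕ} (hk : 0 < k) {a : ℕ∞} (h : (k : ℕ∞) ≤ a) :
    pinv a ≤ (k : ℝ)⁻¹ := by
  induction a using ENat.recTopCoe with
  | top => rw [pinv_top]; positivity
  | coe j =>
    have hkj : k ≤ j := by exact_mod_cast h
    have hj : pinv (j : ℕ∞) = ((j : ℕ) : ℝ)⁻¹ := by simp [pinv]
    rw [hj]
    have h0 : (0:ℝ) < k := by exact_mod_cast hk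
    gcongr

lemma pinv_pos' {a : ℕ∞} (ha : a ≠ ⊤) (h1 : 1 ≤ a) : 0 < pinv a := by
  lift a to ℕ using ha
  have h1' : 1 ≤ a := by exact_mod_cast h1
  have ha' : pinv (a : ℕ∞) = ((a : ℕ) : ℝ)⁻¹ := by simp [pinv]
  rw [ha']
  have : (0:ℝ) < a := by exact_mod_cast h1'
  positivity

lemma pierce_lb {σ : ℕ → ℕ∞} (hσ : IsPierce σ) : ∀ n : ℕ, ((n : ℕ∞) + 1) ≤ σ n := by
  intro n
  induction n with
  | zero => simpa using hσ.1
  | succ n ih =>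
    rcases hσ.2 n with h | h
    · have h1 : σ n + 1 ≤ σ (n + 1) := Order.add_one_le_of_lt h
      have h2 : ((n : ℕ∞) + 1) + 1 ≤ σ n + 1 := add_le_add ih le_rfl
      have h3 : (((n+1 : ℕ) : ℕ∞) + 1) = ((n : ℕ∞) + 1) + 1 := by push_cast; ring
      rw [h3]
      exact h2.trans h1
    · rw [h.2]; exact le_top

lemma prho_nonneg' (x y : ℕ∞) : 0 ≤ prho x y := by
  unfold prho; split
  · exact le_refl 0
  · exact add_nonneg (pinv_nonneg' _) (pinv_nonneg' _)

lemma prho_le_two (x y : ℕ∞) : prho x y ≤ 2 := by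
  unfold prho; split
  · norm_num
  · linarith [pinv_le_one' x, pinv_le_one' y]

lemma pinv_le_prho {x y : ℕ∞} (h : x ≠ y) : pinv x ≤ prho x y := by
  unfold prho; rw [if_neg h]; linarith [pinv_nonneg' y]

lemma pinv_le_prho_top {y : ℕ∞} : pinv y ≤ prho ⊤ y := by
  unfold prho; split
  · next h => rw [← h, pinv_top]
  · rw [pinv_top]; linarith [pinv_nonneg' y]

lemma two_pow_le_fact (n : ℕ) : (2:ℕ)^n ≤ (n+1).factorial := by
  induction n with
  | zero => simp [Nat.factorial]
  | succ n ih =>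
    rw [pow_succ]
    calc 2^n * 2 ≤ (n+1).factorial * 2 := Nat.mul_le_mul_right 2 ih
      _ ≤ (n+1).factorial * (n+2) := Nat.mul_le_mul_left _ (by omega)
      _ = (n+2).factorial := by rw [Nat.factorial_succ (n+1)]; ring

lemma inv_fact_le (n : ℕ) : (((n+1).factorial : ℕ) : ℝ)⁻¹ ≤ (1/2:ℝ)^n := by
  have h : ((2:ℝ))^n ≤ (((n+1).factorial : ℕ) : ℝ) := by exact_mod_cast two_pow_le_fact n
  have h2 : (0:ℝ) < (2:ℝ)^n := by positivity
  have h3 : (((n+1).factorial : ℕ) : ℝ)⁻¹ ≤ ((2:ℝ)^n)⁻¹ := by gcongr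
  calc (((n+1).factorial : ℕ) : ℝ)⁻¹ ≤ ((2:ℝ)^n)⁻¹ := h3
    _ = (1/2:ℝ)^n := by rw [one_div, inv_pow]

/-- `1/(σ_1 ⋯ σ_{k+1})`. -/
noncomputable def pA (ρ : ℕ → ℕ∞) (k : ℕ) : ℝ := ∏ i ∈ Finset.range (k+1), pinv (ρ i)

lemma pA_nonneg (ρ : ℕ → ℕ∞) (k : ℕ) : 0 ≤ pA ρ k :=
  Finset.prod_nonneg fun i _ => pinv_nonneg' _

lemma pinv_le_half {ρ : ℕ → ℕ∞} (hρ : IsPierce ρ) {i : ℕ} (hi : 1 ≤ i) :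
    pinv (ρ i) ≤ 1/2 := by
  have h2 : (2 : ℕ∞) ≤ ρ i := by
    refine le_trans ?_ (pierce_lb hρ i)
    have : (1 : ℕ∞) ≤ (i : ℕ∞) := by exact_mod_cast hi
    calc (2 : ℕ∞) = 1 + 1 := by norm_num
      _ ≤ (i : ℕ∞) + 1 := add_le_add this le_rfl
  have := pinv_le_inv' (k := 2) (by norm_num) h2
  calc pinv (ρ i) ≤ ((2:ℕ) : ℝ)⁻¹ := this
    _ = 1/2 := by norm_num

lemma pA_le {ρ : ℕ → ℕ∞} (hρ : IsPierce ρ) {m : ℕ} {η : ℝ} (hη0 : 0 ≤ η)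
    (hη : pinv (ρ m) ≤ η) {k : ℕ} (hk : m ≤ k) :
    pA ρ k ≤ η * 2^m * (1/2:ℝ)^k := by
  have hsplit : k + 1 = m + (k + 1 - m) := by omega
  have key : pA ρ k = (∏ i ∈ Finset.range m, pinv (ρ i)) *
      (∏ i ∈ Finset.range (k+1-m), pinv (ρ (m+i))) := by
    rw [pA]
    conv_lhs => rw [hsplit, Finset.prod_range_add]
  have h1 : (∏ i ∈ Finset.range m, pinv (ρ i)) ≤ 1 :=
    Finset.prod_le_one (fun i _ => pinv_nonneg' _) (fun i _ => pinv_le_one' _)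
  have h1' : 0 ≤ ∏ i ∈ Finset.range m, pinv (ρ i) :=
    Finset.prod_nonneg fun i _ => pinv_nonneg' _
  have hn : k + 1 - m = (k - m) + 1 := by omega
  have h2 : (∏ i ∈ Finset.range (k+1-m), pinv (ρ (m+i))) =
      (∏ i ∈ Finset.range (k-m), pinv (ρ (m+(i+1)))) * pinv (ρ (m+0)) := by
    rw [hn, Finset.prod_range_succ']
  have h3 : (∏ i ∈ Finset.range (k-m), pinv (ρ (m+(i+1)))) ≤ (1/2:ℝ)^(k-m) := by
    calc (∏ i ∈ Finset.range (k-m), pinv (ρ (m+(i+1))))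
        ≤ ∏ _i ∈ Finset.range (k-m), (1/2:ℝ) :=
          Finset.prod_le_prod (fun i _ => pinv_nonneg' _)
            (fun i _ => pinv_le_half hρ (by omega))
      _ = (1/2:ℝ)^(k-m) := by rw [Finset.prod_const, Finset.card_range]
  have h3' : 0 ≤ ∏ i ∈ Finset.range (k-m), pinv (ρ (m+(i+1))) :=
    Finset.prod_nonneg fun i _ => pinv_nonneg' _
  have h4 : (∏ i ∈ Finset.range (k+1-m), pinv (ρ (m+i))) ≤ (1/2:ℝ)^(k-m) * η := by
    rw [h2]
    have : pinv (ρ (m+0)) ≤ η := by simpa using hη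
    exact mul_le_mul h3 this (pinv_nonneg' _) (by positivity)
  have h5 : pA ρ k ≤ (1/2:ℝ)^(k-m) * η := by
    rw [key]
    calc (∏ i ∈ Finset.range m, pinv (ρ i)) * (∏ i ∈ Finset.range (k+1-m), pinv (ρ (m+i)))
        ≤ 1 * ((1/2:ℝ)^(k-m) * η) := by
          refine mul_le_mul h1 h4 ?_ (by norm_num)
          exact Finset.prod_nonneg fun i _ => pinv_nonneg' _
      _ = (1/2:ℝ)^(k-m) * η := one_mul _
  have h6 : η * 2^m * (1/2:ℝ)^k = (1/2:ℝ)^(k-m) * η := by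
    have e : k = m + (k - m) := by omega
    calc η * 2^m * (1/2:ℝ)^k = η * 2^m * ((1/2:ℝ)^m * (1/2:ℝ)^(k-m)) := by
          conv_lhs => rw [e, pow_add]
      _ = η * ((2:ℝ)^m * (1/2:ℝ)^m) * (1/2:ℝ)^(k-m) := by ring
      _ = (1/2:ℝ)^(k-m) * η := by rw [← mul_pow]; norm_num; ring
  rw [h6]; exact h5

lemma pA_le_geom {ρ : ℕ → ℕ∞} (hρ : IsPierce ρ) (k : ℕ) : pA ρ k ≤ (1/2:ℝ)^k := by
  have := pA_le hρ (m := 0) (η := 1) zero_le_one (pinv_le_one' _) (Nat.zero_le k)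
  simpa using this

/-- Signed term of the `φ` series. -/
noncomputable def pf (ρ : ℕ → ℕ∞) (k : ℕ) : ℝ := (-1:ℝ)^k * pA ρ k

lemma pf_abs (ρ : ℕ → ℕ∞) (k : ℕ) : |pf ρ k| = pA ρ k := by
  rw [pf, abs_mul, abs_pow, abs_neg, abs_one, one_pow, one_mul,
    abs_of_nonneg (pA_nonneg _ _)]

lemma abs_tsum_le' {f : ℕ → ℝ} (hs : Summable (fun k => |f k|)) :
    |∑' k : ℕ, f k| ≤ ∑' k : ℕ, |f k| := by
  have h := norm_tsum_le_tsum_norm (f := f) (by simpa [Real.norm_eq_abs] using hs)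
  simpa [Real.norm_eq_abs] using h

lemma summable_geom_half : Summable (fun k : ℕ => (1/2:ℝ)^k) :=
  summable_geometric_of_lt_one (by norm_num) (by norm_num)

lemma summable_pf {ρ : ℕ → ℕ∞} (hρ : IsPierce ρ) : Summable (pf ρ) := by
  refine Summable.of_abs ?_
  refine Summable.of_nonneg_of_le (fun k => abs_nonneg _) (fun k => ?_) summable_geom_half
  rw [pf_abs]; exact pA_le_geom hρ k

lemma tsum_geom_shift (c : ℝ) (n : ℕ) :
    ∑' k : ℕ, c * (1/2:ℝ)^(k+n) = 2 * c * (1/2:ℝ)^n := by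
  have h1 : ∀ k : ℕ, c * (1/2:ℝ)^(k+n) = (1/2:ℝ)^k * (c * (1/2:ℝ)^n) := by
    intro k; rw [pow_add]; ring
  rw [tsum_congr h1, tsum_mul_right, tsum_geometric_of_lt_one (by norm_num) (by norm_num)]
  norm_num; ring

lemma summable_geom_shift (c : ℝ) (n : ℕ) : Summable (fun k : ℕ => c * (1/2:ℝ)^(k+n)) := by
  have : (fun k : ℕ => c * (1/2:ℝ)^(k+n)) = (fun k : ℕ => (1/2:ℝ)^k * (c * (1/2:ℝ)^n)) := by
    funext k; rw [pow_add]; ring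
  rw [this]
  exact summable_geom_half.mul_right _

lemma pphi_sub {ρ : ℕ → ℕ∞} (hρ : IsPierce ρ) (n : ℕ) :
    pphi ρ - pphiN n ρ = ∑' k : ℕ, pf ρ (k + n) := by
  have h := Summable.sum_add_tsum_nat_add (f := pf ρ) n (summable_pf hρ)
  have h1 : pphi ρ = ∑' i, pf ρ i := rfl
  have h2 : pphiN n ρ = ∑ i ∈ Finset.range n, pf ρ i := rfl
  rw [h1, h2, ← h]; ring

lemma S_abs {ρ : ℕ → ℕ∞} (hρ : IsPierce ρ) (n : ℕ) :
    |pphi ρ - pphiN (n+1) ρ| ≤ (1/2:ℝ)^n := by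
  rw [pphi_sub hρ (n+1)]
  have habs : Summable (fun k : ℕ => |pf ρ k|) := (summable_pf hρ).abs
  have hs : Summable (fun k : ℕ => |pf ρ (k + (n+1))|) :=
    (summable_nat_add_iff (n+1)).2 habs
  calc |∑' k : ℕ, pf ρ (k + (n+1))| ≤ ∑' k : ℕ, |pf ρ (k + (n+1))| := abs_tsum_le' hs
    _ ≤ ∑' k : ℕ, 1 * (1/2:ℝ)^(k + (n+1)) :=
        Summable.tsum_le_tsum (fun k => by rw [pf_abs, one_mul]; exact pA_le_geom hρ _) hs
          (summable_geom_shift 1 (n+1))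
    _ = 2 * 1 * (1/2:ℝ)^(n+1) := tsum_geom_shift 1 (n+1)
    _ = (1/2:ℝ)^n := by rw [pow_succ]; ring

lemma summable_S {ρ : ℕ → ℕ∞} (hρ : IsPierce ρ) :
    Summable (fun n : ℕ => pphi ρ - pphiN (n+1) ρ) := by
  refine Summable.of_abs ?_
  exact Summable.of_nonneg_of_le (fun n => abs_nonneg _) (fun n => S_abs hρ n)
    summable_geom_half

lemma main_bound {σ τ : ℕ → ℕ∞} (hσ : IsPierce σ) (hτ : IsPierce τ) (m : ℕ) {C : ℝ}
    (hC : 0 ≤ C)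
    (hD : ∀ k, |pA τ k - pA σ k| ≤ if k < m then 0 else C * (1/2:ℝ)^k) :
    |pEstar τ - pEstar σ| ≤ 2*C*(m+1)*(1/2:ℝ)^m := by
  set D : ℕ → ℝ := fun j => if j < m then 0 else C * (1/2:ℝ)^j with hDdef
  have hD' : ∀ j, |pA τ j - pA σ j| ≤ D j := by
    intro j; simp only [hDdef]; exact hD j
  have hD0 : ∀ j, 0 ≤ D j := by
    intro j; simp only [hDdef]
    split
    · exact le_refl 0
    · positivity
  have hDle : ∀ j, D j ≤ C * (1/2:ℝ)^j := by
    intro j; simp only [hDdef]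
    split
    · positivity
    · exact le_refl _
  have hDsum : Summable D := Summable.of_nonneg_of_le hD0 hDle (summable_geom_half.mul_left C)
  have hDshift : ∀ a : ℕ, Summable (fun k : ℕ => D (k + a)) := fun a =>
    (summable_nat_add_iff a).2 hDsum
  have hpfD : ∀ j, |pf τ j - pf σ j| ≤ D j := by
    intro j
    have h : pf τ j - pf σ j = (-1:ℝ)^j * (pA τ j - pA σ j) := by rw [pf, pf]; ring
    rw [h, abs_mul, abs_pow, abs_neg, abs_one, one_pow, one_mul]
    exact hD' j
  set T : ℕ → ℝ := fun n => ∑' k : ℕ, D (k + (n+1)) with hTdef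
  have hT0 : ∀ n, 0 ≤ T n := by
    intro n; simp only [hTdef]
    exact tsum_nonneg (fun k => hD0 _)
  have hTle1 : ∀ n, T n ≤ C * (1/2:ℝ)^n := by
    intro n; simp only [hTdef]
    calc (∑' k : ℕ, D (k + (n+1))) ≤ ∑' k : ℕ, C * (1/2:ℝ)^(k+(n+1)) :=
        Summable.tsum_le_tsum (fun k => hDle _) (hDshift (n+1)) (summable_geom_shift C (n+1))
      _ = 2 * C * (1/2:ℝ)^(n+1) := tsum_geom_shift C (n+1)
      _ = C * (1/2:ℝ)^n := by rw [pow_succ]; ring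
  have hTsum : Summable T := Summable.of_nonneg_of_le hT0 hTle1 (summable_geom_half.mul_left C)
  have hDtot : ∑' j : ℕ, D j = 2 * C * (1/2:ℝ)^m := by
    have h := Summable.sum_add_tsum_nat_add (f := D) m hDsum
    have h1 : ∑ i ∈ Finset.range m, D i = 0 :=
      Finset.sum_eq_zero (fun i hi => by simp [hDdef, Finset.mem_range.1 hi])
    have h2 : (∑' k : ℕ, D (k + m)) = ∑' k : ℕ, C * (1/2:ℝ)^(k+m) :=
      tsum_congr (fun k => by simp [hDdef, Nat.not_lt.2 (Nat.le_add_left m k)])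
    rw [← h, h1, h2, tsum_geom_shift]; ring
  have hTle2 : ∀ n, T n ≤ 2 * C * (1/2:ℝ)^m := by
    intro n
    have key : ∑ i ∈ Finset.range (n+1), D i + ∑' k : ℕ, D (k+(n+1)) = ∑' j : ℕ, D j :=
      Summable.sum_add_tsum_nat_add (n+1) hDsum
    have hfin : 0 ≤ ∑ i ∈ Finset.range (n+1), D i := Finset.sum_nonneg (fun i _ => hD0 i)
    have hTn : T n ≤ ∑' j : ℕ, D j := by
      simp only [hTdef]; linarith [key]
    rw [hDtot] at hTn; exact hTn
  have hTtot : ∑' n : ℕ, T n ≤ 2*C*(m+1)*(1/2:ℝ)^m := by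
    have h := Summable.sum_add_tsum_nat_add (f := T) m hTsum
    have h1 : ∑ i ∈ Finset.range m, T i ≤ m * (2*C*(1/2:ℝ)^m) := by
      calc ∑ i ∈ Finset.range m, T i ≤ ∑ _i ∈ Finset.range m, 2*C*(1/2:ℝ)^m :=
          Finset.sum_le_sum (fun i _ => hTle2 i)
        _ = m * (2*C*(1/2:ℝ)^m) := by rw [Finset.sum_const, Finset.card_range, nsmul_eq_mul]
    have h2 : (∑' k : ℕ, T (k + m)) ≤ 2*C*(1/2:ℝ)^m := by
      calc (∑' k : ℕ, T (k+m)) ≤ ∑' k : ℕ, C * (1/2:ℝ)^(k+m) :=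
          Summable.tsum_le_tsum (fun k => hTle1 _) ((summable_nat_add_iff m).2 hTsum)
            (summable_geom_shift C m)
        _ = 2 * C * (1/2:ℝ)^m := tsum_geom_shift C m
    calc ∑' n : ℕ, T n = ∑ i ∈ Finset.range m, T i + ∑' k : ℕ, T (k+m) := h.symm
      _ ≤ m * (2*C*(1/2:ℝ)^m) + 2*C*(1/2:ℝ)^m := add_le_add h1 h2
      _ = 2*C*(m+1)*(1/2:ℝ)^m := by ring
  have hterm : ∀ n, |(pphi τ - pphiN (n+1) τ) - (pphi σ - pphiN (n+1) σ)| ≤ T n := by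
    intro n
    rw [pphi_sub hτ (n+1), pphi_sub hσ (n+1),
      ← Summable.tsum_sub ((summable_nat_add_iff (n+1)).2 (summable_pf hτ))
        ((summable_nat_add_iff (n+1)).2 (summable_pf hσ))]
    have hs : Summable (fun k : ℕ => |pf τ (k+(n+1)) - pf σ (k+(n+1))|) :=
      Summable.of_nonneg_of_le (fun k => abs_nonneg _) (fun k => hpfD _) (hDshift (n+1))
    calc |∑' k : ℕ, (pf τ (k+(n+1)) - pf σ (k+(n+1)))|
        ≤ ∑' k : ℕ, |pf τ (k+(n+1)) - pf σ (k+(n+1))| := abs_tsum_le' hs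
      _ ≤ T n := by
          simp only [hTdef]
          exact Summable.tsum_le_tsum (fun k => hpfD _) hs (hDshift (n+1))
  have hdiff : pEstar τ - pEstar σ =
      ∑' n : ℕ, ((pphi τ - pphiN (n+1) τ) - (pphi σ - pphiN (n+1) σ)) := by
    unfold pEstar
    exact (Summable.tsum_sub (summable_S hτ) (summable_S hσ)).symm
  have hsabs : Summable (fun n : ℕ => |(pphi τ - pphiN (n+1) τ) - (pphi σ - pphiN (n+1) σ)|) :=
    Summable.of_nonneg_of_le (fun n => abs_nonneg _) hterm hTsum
  have hsdiff : Summable (fun n : ℕ => (pphi τ - pphiN (n+1) τ) - (pphi σ - pphiN (n+1) σ)) :=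
    (summable_S hτ).sub (summable_S hσ)
  calc |pEstar τ - pEstar σ|
      = |∑' n : ℕ, ((pphi τ - pphiN (n+1) τ) - (pphi σ - pphiN (n+1) σ))| := by rw [hdiff]
    _ ≤ ∑' n : ℕ, |(pphi τ - pphiN (n+1) τ) - (pphi σ - pphiN (n+1) σ)| := abs_tsum_le' hsabs
    _ ≤ ∑' n : ℕ, T n := Summable.tsum_le_tsum hterm hsabs hTsum
    _ ≤ 2*C*(m+1)*(1/2:ℝ)^m := hTtot

lemma summable_prho (σ τ : ℕ → ℕ∞) :
    Summable (fun n : ℕ => prho (σ n) (τ n) / ((n + 1).factorial : ℝ)) := by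
  refine Summable.of_nonneg_of_le
    (fun n => div_nonneg (prho_nonneg' _ _) (by positivity))
    (fun n => ?_) (summable_geom_half.mul_left 2)
  rw [div_eq_mul_inv]
  have h1 : prho (σ n) (τ n) ≤ 2 := prho_le_two _ _
  have h2 : (((n+1).factorial : ℕ) : ℝ)⁻¹ ≤ (1/2:ℝ)^n := inv_fact_le n
  have h3 : (0:ℝ) ≤ (((n+1).factorial : ℕ) : ℝ)⁻¹ := by positivity
  exact mul_le_mul h1 h2 h3 (by norm_num)

lemma exists_lb (σ : ℕ → ℕ∞) (m : ℕ) (hfin : ∀ n < m, 0 < pinv (σ n)) :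
    ∃ c > (0:ℝ), ∀ n < m, c ≤ pinv (σ n) := by
  induction m with
  | zero => exact ⟨1, one_pos, fun n hn => absurd hn (Nat.not_lt_zero n)⟩
  | succ m ih =>
    obtain ⟨c, hc0, hc⟩ := ih (fun n hn => hfin n (hn.trans (Nat.lt_succ_self m)))
    refine ⟨min c (pinv (σ m)), lt_min hc0 (hfin m (Nat.lt_succ_self m)), ?_⟩
    intro n hn
    rcases Nat.lt_succ_iff_lt_or_eq.1 hn with h | h
    · exact (min_le_left _ _).trans (hc n h)
    · subst h; exact min_le_right _ _

lemma prho_lt {σ τ : ℕ → ℕ∞} {b : ℝ} {m : ℕ} (hb : 0 < b)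
    (h : prhoN σ τ < b / ((m + 1).factorial : ℝ)) :
    ∀ n ≤ m, prho (σ n) (τ n) < b := by
  intro n hn
  have h1 : prho (σ n) (τ n) / ((n + 1).factorial : ℝ) ≤ prhoN σ τ :=
    Summable.le_tsum (summable_prho σ τ) n
      (fun i _ => div_nonneg (prho_nonneg' _ _) (by positivity))
  have h2 : prho (σ n) (τ n) / ((n + 1).factorial : ℝ) < b / ((m + 1).factorial : ℝ) :=
    lt_of_le_of_lt h1 h
  have hfp : (0:ℝ) < ((n + 1).factorial : ℝ) := by
    exact_mod_cast Nat.factorial_pos (n+1)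
  have hfact : ((n + 1).factorial : ℝ) ≤ ((m + 1).factorial : ℝ) := by
    exact_mod_cast Nat.factorial_le (by omega)
  have h3 : prho (σ n) (τ n) < b / ((m + 1).factorial : ℝ) * ((n + 1).factorial : ℝ) :=
    (div_lt_iff₀ hfp).1 h2
  have h4 : b / ((m + 1).factorial : ℝ) * ((n + 1).factorial : ℝ) ≤ b := by
    rw [div_mul_eq_mul_div, mul_div_assoc]
    have hle1 : ((n + 1).factorial : ℝ) / ((m + 1).factorial : ℝ) ≤ 1 :=
      div_le_one_of_le₀ hfact (by positivity)
    exact mul_le_of_le_one_right hb.le hle1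
  linarith

lemma pinv_pos_of_pierce {σ : ℕ → ℕ∞} (hσ : IsPierce σ) {n : ℕ} (h : σ n ≠ ⊤) :
    0 < pinv (σ n) := by
  refine pinv_pos' h ?_
  exact le_trans le_add_self (pierce_lb hσ n)

lemma abs_sub_le_sum {a b : ℝ} : |a - b| ≤ |a| + |b| := by
  calc |a - b| = |a + -b| := by ring_nf
    _ ≤ |a| + |-b| := abs_add_le _ _
    _ = |a| + |b| := by rw [abs_neg]

theorem stmt13 (σ : ℕ → ℕ∞) (hσ : IsPierce σ) :
    ∀ ε > (0 : ℝ), ∃ δ > (0 : ℝ), ∀ τ : ℕ → ℕ∞, IsPierce τ →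
      prhoN σ τ < δ → |pEstar τ - pEstar σ| < ε := by
  intro ε hε
  by_cases htop : ∃ n, σ n = ⊤
  · -- some digit of σ is infinite
    set m := Nat.find htop with hmdef
    have hm : σ m = ⊤ := Nat.find_spec htop
    have hlt : ∀ n < m, σ n ≠ ⊤ := fun n hn => Nat.find_min htop hn
    set η := ε / (2*((m:ℝ)+1)+1) with hηdef
    have hη : 0 < η := div_pos hε (by positivity)
    obtain ⟨c, hc0, hc⟩ := exists_lb σ m (fun n hn => pinv_pos_of_pierce hσ (hlt n hn))
    have hb : 0 < min c η := lt_min hc0 hη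
    refine ⟨min c η / ((m + 1).factorial : ℝ), div_pos hb (by positivity), ?_⟩
    intro τ hτ hd
    have hlt' : ∀ n ≤ m, prho (σ n) (τ n) < min c η := prho_lt hb hd
    have hagree : ∀ n < m, σ n = τ n := by
      intro n hn
      by_contra hne
      have h1 : pinv (σ n) ≤ prho (σ n) (τ n) := pinv_le_prho hne
      have h2 : prho (σ n) (τ n) < min c η := hlt' n hn.le
      have h3 : min c η ≤ c := min_le_left _ _
      have h4 : c ≤ pinv (σ n) := hc n hn
      linarith
    have hτm : pinv (τ m) ≤ η := by
      have h1 : pinv (τ m) ≤ prho (σ m) (τ m) := by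
        rw [hm]; exact pinv_le_prho_top
      have h2 : prho (σ m) (τ m) < min c η := hlt' m le_rfl
      have h3 : min c η ≤ η := min_le_right _ _
      linarith
    have hD : ∀ k, |pA τ k - pA σ k| ≤ if k < m then 0 else (η*2^m) * (1/2:ℝ)^k := by
      intro k
      split
      · next h =>
        have heq : pA σ k = pA τ k := by
          refine Finset.prod_congr rfl (fun i hi => ?_)
          have hik : i < k + 1 := Finset.mem_range.1 hi
          rw [hagree i (by omega)]
        rw [heq, sub_self, abs_zero]
      · next h =>
        have hk : m ≤ k := Nat.le_of_not_lt h
        have hσ0 : pA σ k = 0 :=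
          Finset.prod_eq_zero (i := m) (Finset.mem_range.2 (by omega)) (by rw [hm, pinv_top])
        rw [hσ0, sub_zero, abs_of_nonneg (pA_nonneg _ _)]
        exact pA_le hτ hη.le hτm hk
    have hmain := main_bound hσ hτ m (C := η*2^m) (by positivity) hD
    have hpow : (2:ℝ)^m * (1/2:ℝ)^m = 1 := by rw [← mul_pow]; norm_num
    have heq : 2*(η*2^m)*((m:ℝ)+1)*(1/2:ℝ)^m = 2*η*((m:ℝ)+1) := by
      calc 2*(η*2^m)*((m:ℝ)+1)*(1/2:ℝ)^m = 2*η*((m:ℝ)+1)*((2:ℝ)^m*(1/2:ℝ)^m) := by ring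
        _ = 2*η*((m:ℝ)+1) := by rw [hpow, mul_one]
    have hεeq : η * (2*((m:ℝ)+1)+1) = ε := div_mul_cancel₀ ε (by positivity)
    have hfin : 2*η*((m:ℝ)+1) < ε := by nlinarith
    calc |pEstar τ - pEstar σ| ≤ 2*(η*2^m)*((m:ℝ)+1)*(1/2:ℝ)^m := hmain
      _ = 2*η*((m:ℝ)+1) := heq
      _ < ε := hfin
  · -- all digits of σ are finite
    push_neg at htop
    have hsum : Summable (fun n : ℕ => 4*((n:ℝ)+1)*(1/2:ℝ)^n) := by
      have h1 : Summable (fun n : ℕ => (n:ℝ)^1 * (1/2:ℝ)^n) :=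
        summable_pow_mul_geometric_of_norm_lt_one 1
          (by rw [Real.norm_eq_abs]; rw [abs_of_pos] <;> norm_num)
      have h2 := summable_geom_half
      have heq : (fun n : ℕ => 4*((n:ℝ)+1)*(1/2:ℝ)^n)
          = fun n : ℕ => 4*((n:ℝ)^1*(1/2:ℝ)^n) + 4*(1/2:ℝ)^n := by
        funext n; ring
      rw [heq]
      exact (h1.mul_left 4).add (h2.mul_left 4)
    have hten : Filter.Tendsto (fun n : ℕ => 4*((n:ℝ)+1)*(1/2:ℝ)^n) Filter.atTop (nhds 0) :=
      hsum.tendsto_atTop_zero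
    obtain ⟨m, hm4⟩ := (hten.eventually (gt_mem_nhds hε)).exists
    obtain ⟨c, hc0, hc⟩ := exists_lb σ m (fun n _ => pinv_pos_of_pierce hσ (htop n))
    refine ⟨c / ((m + 1).factorial : ℝ), div_pos hc0 (by positivity), ?_⟩
    intro τ hτ hd
    have hlt' : ∀ n ≤ m, prho (σ n) (τ n) < c := prho_lt hc0 hd
    have hagree : ∀ n < m, σ n = τ n := by
      intro n hn
      by_contra hne
      have h1 : pinv (σ n) ≤ prho (σ n) (τ n) := pinv_le_prho hne
      have h2 : prho (σ n) (τ n) < c := hlt' n hn.le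
      have h4 : c ≤ pinv (σ n) := hc n hn
      linarith
    have hD : ∀ k, |pA τ k - pA σ k| ≤ if k < m then 0 else (2:ℝ) * (1/2:ℝ)^k := by
      intro k
      split
      · next h =>
        have heq : pA σ k = pA τ k := by
          refine Finset.prod_congr rfl (fun i hi => ?_)
          have hik : i < k + 1 := Finset.mem_range.1 hi
          rw [hagree i (by omega)]
        rw [heq, sub_self, abs_zero]
      · next _ =>
        calc |pA τ k - pA σ k| ≤ |pA τ k| + |pA σ k| := abs_sub_le_sum
          _ = pA τ k + pA σ k := by
              rw [abs_of_nonneg (pA_nonneg _ _), abs_of_nonneg (pA_nonneg _ _)]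
          _ ≤ (1/2:ℝ)^k + (1/2:ℝ)^k := add_le_add (pA_le_geom hτ k) (pA_le_geom hσ k)
          _ = (2:ℝ) * (1/2:ℝ)^k := by ring
    have hmain := main_bound hσ hτ m (C := (2:ℝ)) (by norm_num) hD
    calc |pEstar τ - pEstar σ| ≤ 2*(2:ℝ)*((m:ℝ)+1)*(1/2:ℝ)^m := hmain
      _ = 4*((m:ℝ)+1)*(1/2:ℝ)^m := by ring
      _ < ε := hm4
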